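/- Let f : ℝ^d → ℝ be C¹ with M-Lipschitz gradient and critical point x*. For h > 0 and θ ∈ [0,1] with either θ ≥ 1/2, or θ < 1/2 and h < 4m/(M²(1−2θ)), where additionally ⟨∇f(x) − ∇f(x*), x − x*⟩ ≥ m‖x−x*‖² − c for all x with m > 0 and c ≥ 0, the function T₁(x) − T₂(x) tends to −∞ as ‖x‖ → ∞, where T₁(x) = ‖x − x* − (h(1−θ)/2)∇f(x)‖ and T₂(x) = ‖x − x* + (hθ/2)∇f(x)‖. -/
import Mathlib


open scoped RealInnerProductSpace

set_option maxHeartbeats 1000000 in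
/-- Under the stated step-size conditions, `T₁(x) − T₂(x) → −∞`
as `‖x‖ → ∞`. -/
theorem stmt_4 {d : ℕ} (f : EuclideanSpace ℝ (Fin d) → ℝ)
    (xstar : EuclideanSpace ℝ (Fin d)) (m c M h θ : ℝ)
    (hf : ContDiff ℝ 1 f)
    (hcrit : gradient f xstar = 0)
    (hLip : ∀ x y : EuclideanSpace ℝ (Fin d),
      ‖gradient f x - gradient f y‖ ≤ M * ‖x - y‖)
    (hsec : ∀ x : EuclideanSpace ℝ (Fin d),
      ⟪gradient f x - gradient f xstar, x - xstar⟫ ≥ m * ‖x - xstar‖ ^ 2 - c)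
    (hm : 0 < m) (hc : 0 ≤ c) (hh : 0 < h) (hθ0 : 0 ≤ θ) (hθ1 : θ ≤ 1)
    (hcond : 1 / 2 ≤ θ ∨ (θ < 1 / 2 ∧ h < 4 * m / (M ^ 2 * (1 - 2 * θ)))) :
    Filter.Tendsto
      (fun x : EuclideanSpace ℝ (Fin d) =>
        ‖x - xstar - (h * (1 - θ) / 2) • gradient f x‖
          - ‖x - xstar + (h * θ / 2) • gradient f x‖)
      (Filter.comap (fun x : EuclideanSpace ℝ (Fin d) => ‖x‖) Filter.atTop)
      Filter.atBot := by
  -- choose ε > 0 controlling the quadratic term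
  obtain ⟨ε, hε, hεkey⟩ : ∃ ε : ℝ, 0 < ε ∧ ∀ G r : ℝ, 0 ≤ G → G ≤ M * r →
      h ^ 2 / 4 * (1 - 2 * θ) * G ^ 2 ≤ (h * m - ε) * r ^ 2 := by
    rcases hcond with hθ | ⟨hθ, hstep⟩
    · refine ⟨h * m, by positivity, fun G r hG hGr => ?_⟩
      have h1 : h ^ 2 / 4 * (1 - 2 * θ) ≤ 0 := by nlinarith [sq_nonneg h]
      nlinarith [sq_nonneg G, sq_nonneg r]
    · refine ⟨h * m - h ^ 2 / 4 * (1 - 2 * θ) * M ^ 2, ?_, fun G r hG hGr => ?_⟩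
      · rcases eq_or_lt_of_le (sq_nonneg M) with hM | hM
        · have hz : h ^ 2 / 4 * (1 - 2 * θ) * M ^ 2 = 0 := by rw [← hM]; ring
          nlinarith [mul_pos hh hm]
        · have hK : 0 < M ^ 2 * (1 - 2 * θ) := by nlinarith
          have h4m : h * (M ^ 2 * (1 - 2 * θ)) < 4 * m := (lt_div_iff₀ hK).mp hstep
          nlinarith [mul_pos hh hK]
      · have h1 : 0 ≤ h ^ 2 / 4 * (1 - 2 * θ) := by nlinarith [sq_nonneg h]
        have h2 : G ^ 2 ≤ (M * r) ^ 2 := by nlinarith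
        nlinarith
  -- the key pointwise quadratic bound
  have key : ∀ x : EuclideanSpace ℝ (Fin d),
      ‖x - xstar - (h * (1 - θ) / 2) • gradient f x‖ ^ 2
        - ‖x - xstar + (h * θ / 2) • gradient f x‖ ^ 2
        ≤ -ε * ‖x - xstar‖ ^ 2 + h * c := by
    intro x
    set y := x - xstar with hy
    set g := gradient f x with hg
    have e1 : ‖y - (h * (1 - θ) / 2) • g‖ ^ 2
        = ‖y‖ ^ 2 - 2 * (h * (1 - θ) / 2) * ⟪g, y⟫
          + (h * (1 - θ) / 2) ^ 2 * ‖g‖ ^ 2 := by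
      rw [norm_sub_sq_real, real_inner_smul_right, norm_smul, Real.norm_eq_abs,
        mul_pow, sq_abs, real_inner_comm y g]
      ring
    have e2 : ‖y + (h * θ / 2) • g‖ ^ 2
        = ‖y‖ ^ 2 + 2 * (h * θ / 2) * ⟪g, y⟫ + (h * θ / 2) ^ 2 * ‖g‖ ^ 2 := by
      rw [norm_add_sq_real, real_inner_smul_right, norm_smul, Real.norm_eq_abs,
        mul_pow, sq_abs, real_inner_comm y g]
      ring
    have hip : m * ‖y‖ ^ 2 - c ≤ ⟪g, y⟫ := by
      have := hsec x; rw [hcrit, sub_zero] at this; exact this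
    have hgb : ‖g‖ ≤ M * ‖y‖ := by
      have := hLip x xstar; rw [hcrit, sub_zero] at this; exact this
    have hmul : h * (m * ‖y‖ ^ 2 - c) ≤ h * ⟪g, y⟫ :=
      mul_le_mul_of_nonneg_left hip hh.le
    have hkey2 := hεkey ‖g‖ ‖y‖ (norm_nonneg _) hgb
    rw [e1, e2]
    nlinarith [hmul, hkey2]
  rw [Filter.tendsto_atBot]
  intro B
  set B' : ℝ := min B (-1) with hB'
  have hB'B : B' ≤ B := min_le_left _ _
  have hB'1 : B' ≤ -1 := min_le_right _ _
  set C : ℝ := 2 + h * |M| / 2 with hC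
  have hC2 : 2 ≤ C := by
    rw [hC]
    nlinarith [mul_nonneg hh.le (abs_nonneg M)]
  have hK0 : 0 ≤ h * c + (-B') * C := by
    have h5 : (0:ℝ) ≤ (-B') * C := mul_nonneg (by linarith) (by linarith)
    have h6 : 0 ≤ h * c := mul_nonneg hh.le hc
    linarith
  set R : ℝ := ‖xstar‖ + 1 + (h * c + (-B') * C) / ε with hR
  have hmem : {x : EuclideanSpace ℝ (Fin d) | R ≤ ‖x‖}
      ∈ Filter.comap (fun x : EuclideanSpace ℝ (Fin d) => ‖x‖) Filter.atTop :=
    Filter.preimage_mem_comap (Filter.eventually_ge_atTop R)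
  filter_upwards [hmem] with x hx
  have hN := key x
  set r := ‖x - xstar‖ with hr
  set y := x - xstar with hy
  set g := gradient f x with hg
  have hrx : ‖x‖ - ‖xstar‖ ≤ r := norm_sub_norm_le x xstar
  have hrR : 1 + (h * c + (-B') * C) / ε ≤ r := by
    rw [hR] at hx; linarith
  have hr1 : 1 ≤ r := by
    have : 0 ≤ (h * c + (-B') * C) / ε := div_nonneg hK0 hε.le
    linarith
  have hr0 : 0 < r := by linarith
  have hKε : h * c + (-B') * C ≤ (r - 1) * ε := (div_le_iff₀ hε).mp (by linarith)
  -- bound on the gradient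
  have hgb : ‖g‖ ≤ M * r := by
    have := hLip x xstar; rw [hcrit, sub_zero] at this; exact this
  have hgb' : ‖g‖ ≤ |M| * r :=
    le_trans hgb (mul_le_mul_of_nonneg_right (le_abs_self M) hr0.le)
  clear_value B' C R r y g
  clear hmem hx hrx hrR
  have ha0 : 0 ≤ h * (1 - θ) / 2 :=
    div_nonneg (mul_nonneg hh.le (by linarith)) (by norm_num)
  have hb0 : 0 ≤ h * θ / 2 := by positivity
  -- bound on the denominator T₁ + T₂
  have h1 : ‖y - (h * (1 - θ) / 2) • g‖ ≤ r + (h * (1 - θ) / 2) * ‖g‖ := by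
    calc ‖y - (h * (1 - θ) / 2) • g‖ ≤ ‖y‖ + ‖(h * (1 - θ) / 2) • g‖ := norm_sub_le _ _
      _ = r + (h * (1 - θ) / 2) * ‖g‖ := by
          rw [norm_smul, Real.norm_eq_abs, abs_of_nonneg ha0, hr]
  have h2 : ‖y + (h * θ / 2) • g‖ ≤ r + (h * θ / 2) * ‖g‖ := by
    calc ‖y + (h * θ / 2) • g‖ ≤ ‖y‖ + ‖(h * θ / 2) • g‖ := norm_add_le _ _
      _ = r + (h * θ / 2) * ‖g‖ := by
          rw [norm_smul, Real.norm_eq_abs, abs_of_nonneg hb0, hr]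
  have h3 : (h * (1 - θ) / 2) * ‖g‖ ≤ (h * (1 - θ) / 2) * (|M| * r) :=
    mul_le_mul_of_nonneg_left hgb' ha0
  have h4 : (h * θ / 2) * ‖g‖ ≤ (h * θ / 2) * (|M| * r) :=
    mul_le_mul_of_nonneg_left hgb' hb0
  have hDle : ‖y - (h * (1 - θ) / 2) • g‖ + ‖y + (h * θ / 2) • g‖ ≤ C * r := by
    rw [hC]; nlinarith [h1, h2, h3, h4]
  -- numerator is very negative
  have hεineq : h * c + (-B') * C * r < ε * r ^ 2 := by
    have hmulr : (h * c + (-B') * C) * r ≤ (r - 1) * ε * r :=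
      mul_le_mul_of_nonneg_right hKε hr0.le
    have hcr : h * c ≤ h * c * r := by
      nlinarith [mul_nonneg (mul_nonneg hh.le hc) (sub_nonneg.mpr hr1)]
    have hεr : 0 < ε * r := mul_pos hε hr0
    nlinarith [hmulr, hcr, hεr]
  -- denominator is positive
  have hT2 : 0 < ‖y + (h * θ / 2) • g‖ := by
    have hneg : ‖y - (h * (1 - θ) / 2) • g‖ ^ 2 - ‖y + (h * θ / 2) • g‖ ^ 2 < 0 := by
      have : 0 < (-B') * C * r := by
        apply mul_pos (mul_pos (by linarith) (by linarith)) hr0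
      nlinarith [hN]
    nlinarith [norm_nonneg (y + (h * θ / 2) • g),
      sq_nonneg ‖y - (h * (1 - θ) / 2) • g‖]
  have hD : 0 < ‖y - (h * (1 - θ) / 2) • g‖ + ‖y + (h * θ / 2) • g‖ := by
    linarith [norm_nonneg (y - (h * (1 - θ) / 2) • g)]
  -- conclude
  have hmulD : (‖y - (h * (1 - θ) / 2) • g‖ - ‖y + (h * θ / 2) • g‖)
      * (‖y - (h * (1 - θ) / 2) • g‖ + ‖y + (h * θ / 2) • g‖)
      ≤ B' * (‖y - (h * (1 - θ) / 2) • g‖ + ‖y + (h * θ / 2) • g‖) := by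
    have e : (‖y - (h * (1 - θ) / 2) • g‖ - ‖y + (h * θ / 2) • g‖)
        * (‖y - (h * (1 - θ) / 2) • g‖ + ‖y + (h * θ / 2) • g‖)
        = ‖y - (h * (1 - θ) / 2) • g‖ ^ 2 - ‖y + (h * θ / 2) • g‖ ^ 2 := by ring
    have s1 : -ε * r ^ 2 + h * c ≤ B' * (C * r) := by linarith [hεineq]
    have s2 : B' * (C * r) ≤ B'
        * (‖y - (h * (1 - θ) / 2) • g‖ + ‖y + (h * θ / 2) • g‖) :=
      mul_le_mul_of_nonpos_left hDle (by linarith : B' ≤ 0)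
    rw [e]
    linarith [hN, s1, s2]
  have hfin := le_of_mul_le_mul_right hmulD hD
  linarith [hB'B, hfin]
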